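/- The number of strings S of length n over an alphabet of size a that contain a fixed word T of length k as a subsequence equals sum_{i=k}^{n} C(n,i) (a-1)^{n-i}, and this count does not depend on the choice of T. -/

import Mathlib

open Finset
open scoped Classical

private lemma icc_zero_eq_range (n : ℕ) : Finset.Icc 0 n = Finset.range (n + 1) := by
  ext x; simp [Nat.lt_succ_iff]

private lemma binom_sum (a n : ℕ) (ha : 1 ≤ a) :
    ∑ i ∈ Finset.Icc 0 n, n.choose i * (a - 1) ^ (n - i) = a ^ n := by
  rw [icc_zero_eq_range,
    ← Finset.sum_range_reflect (fun i => n.choose i * (a - 1) ^ (n - i)) (n + 1)]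
  simp only [Nat.add_sub_cancel]
  have h : ∀ j ∈ Finset.range (n + 1),
      n.choose (n - j) * (a - 1) ^ (n - (n - j)) = (a - 1) ^ j * 1 ^ (n - j) * n.choose j := by
    intro j hj
    rw [Finset.mem_range, Nat.lt_succ_iff] at hj
    have h' : n - (n - j) = j := by omega
    rw [Nat.choose_symm hj, h', one_pow, mul_one, mul_comm]
  rw [Finset.sum_congr rfl h]
  have hb := add_pow (a - 1) (1 : ℕ) n
  simp only [Nat.cast_id] at hb
  rw [← hb, Nat.sub_add_cancel ha]

private lemma icc_succ_image (k n : ℕ) :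
    Finset.Icc (k + 1) (n + 1) = (Finset.Icc k n).image (· + 1) := by
  ext x
  simp only [Finset.mem_Icc, Finset.mem_image]
  constructor
  · intro h; exact ⟨x - 1, by omega, by omega⟩
  · rintro ⟨y, hy, rfl⟩; omega

private lemma sum_step (a n k : ℕ) :
    ∑ i ∈ Finset.Icc k n, n.choose i * (a - 1) ^ (n - i)
      + (a - 1) * ∑ i ∈ Finset.Icc (k + 1) n, n.choose i * (a - 1) ^ (n - i)
      = ∑ i ∈ Finset.Icc (k + 1) (n + 1), (n + 1).choose i * (a - 1) ^ (n + 1 - i) := by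
  rw [icc_succ_image, Finset.sum_image (by intro x _ y _ h; simp only at h; omega)]
  have h : ∀ j ∈ Finset.Icc k n,
      (n + 1).choose (j + 1) * (a - 1) ^ (n + 1 - (j + 1))
        = n.choose j * (a - 1) ^ (n - j) + n.choose (j + 1) * (a - 1) ^ (n - j) := by
    intro j hj
    rw [Nat.choose_succ_succ, Nat.succ_sub_succ, add_mul]
  rw [Finset.sum_congr rfl h, Finset.sum_add_distrib]
  congr 1
  -- ∑ j ∈ Icc k n, n.choose (j+1) * (a-1)^(n-j) = (a-1) * ∑ i ∈ Icc (k+1) n, ...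
  rw [Finset.mul_sum]
  have key : ∀ i ∈ Finset.Icc (k + 1) (n + 1),
      n.choose i * (a - 1) ^ (n + 1 - i) = (a - 1) * (n.choose i * (a - 1) ^ (n - i)) ∨
      n.choose i = 0 := by
    intro i hi
    rw [Finset.mem_Icc] at hi
    rcases Nat.lt_or_ge i (n + 1) with h' | h'
    · left
      have : n + 1 - i = (n - i) + 1 := by omega
      rw [this, pow_succ]; ring
    · right
      exact Nat.choose_eq_zero_of_lt (by omega)
  have expand : ∑ j ∈ Finset.Icc k n, n.choose (j + 1) * (a - 1) ^ (n - j)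
      = ∑ i ∈ Finset.Icc (k + 1) (n + 1), n.choose i * (a - 1) ^ (n + 1 - i) := by
    rw [icc_succ_image, Finset.sum_image (by intro x _ y _ h; simp only at h; omega)]
    apply Finset.sum_congr rfl
    intro j hj
    rw [Nat.succ_sub_succ]
  rw [expand]
  have split : Finset.Icc (k + 1) (n + 1)
      = if k + 1 ≤ n + 1 then insert (n + 1) (Finset.Icc (k + 1) n) else ∅ := by
    split_ifs with h'
    · ext x; simp only [Finset.mem_Icc, Finset.mem_insert]; omega
    · ext x; simp only [Finset.mem_Icc, Finset.notMem_empty, iff_false]; omega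
  rcases Nat.lt_or_ge n k with hnk | hnk
  · have h1 : Finset.Icc (k + 1) (n + 1) = if n + 1 < k + 1 then ∅ else {k + 1} := by
      split_ifs with h'
      · ext x; simp only [Finset.mem_Icc, Finset.notMem_empty, iff_false]; omega
      · have : k = n := by omega
        subst this
        ext x; simp only [Finset.mem_Icc, Finset.mem_singleton]; omega
    have h2 : Finset.Icc (k + 1) n = ∅ := by
      ext x; simp only [Finset.mem_Icc, Finset.notMem_empty, iff_false]; omega
    rw [h1, h2]
    split_ifs with h'
    · simp
    · have : k = n := by omega
      subst this
      simp [Nat.choose_eq_zero_of_lt]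
  · rw [split, if_pos (by omega), Finset.sum_insert (by simp)]
    rw [Nat.choose_eq_zero_of_lt (by omega), zero_mul, zero_add]
    apply Finset.sum_congr rfl
    intro i hi
    rw [Finset.mem_Icc] at hi
    have : n + 1 - i = (n - i) + 1 := by omega
    rw [this, pow_succ]; ring

private lemma cons_sublist_iff {α : Type*} (t s : α) (T L : List α) :
    (t :: T).Sublist (s :: L) ↔ (if s = t then T.Sublist L else (t :: T).Sublist L) := by
  split_ifs with h
  · subst h; exact List.cons_sublist_cons
  · rw [List.cons_sublist_cons']
    constructor
    · rintro (h' | ⟨rfl, h'⟩)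
      · exact h'
      · exact absurd rfl h
    · exact Or.inl

private lemma main_count (a : ℕ) (ha : 1 ≤ a) :
    ∀ (n : ℕ) (T : List (Fin a)),
      (Finset.univ.filter (fun S : Fin n → Fin a => T.Sublist (List.ofFn S))).card
        = ∑ i ∈ Finset.Icc T.length n, n.choose i * (a - 1) ^ (n - i) := by
  intro n
  induction n with
  | zero =>
    intro T
    cases T with
    | nil => simp
    | cons t T' =>
      rw [Finset.filter_false_of_mem (by intro S _; simp [List.ofFn_zero])]
      have : Finset.Icc (t :: T').length 0 = ∅ := by
        ext x; simp only [Finset.mem_Icc, Finset.notMem_empty, iff_false, List.length_cons]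
        omega
      simp [this]
  | succ n ih =>
    intro T
    cases T with
    | nil =>
      rw [Finset.filter_true_of_mem (by intro S _; exact List.nil_sublist _)]
      rw [List.length_nil, binom_sum a (n + 1) ha]
      simp [Finset.card_univ]
    | cons t T' =>
      -- decompose functions on Fin (n+1) via Fin.cons
      have hcard : (Finset.univ.filter
            (fun S : Fin (n + 1) → Fin a => (t :: T').Sublist (List.ofFn S))).card
          = ∑ s : Fin a, (Finset.univ.filter
            (fun S' : Fin n → Fin a => (t :: T').Sublist (s :: List.ofFn S'))).card := by
        rw [Finset.card_filter]
        rw [← (Fin.consEquiv (fun _ => Fin a)).sum_comp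
          (fun S => if (t :: T').Sublist (List.ofFn S) then 1 else 0)]
        rw [Fintype.sum_prod_type]
        apply Finset.sum_congr rfl
        intro s _
        rw [Finset.card_filter]
        apply Finset.sum_congr rfl
        intro S' _
        congr 1
        have : List.ofFn ((Fin.consEquiv (fun _ => Fin a)) (s, S')) = s :: List.ofFn S' := by
          rw [List.ofFn_succ]
          congr 1
        rw [this]
      rw [hcard]
      have hsplit : ∀ s : Fin a,
          (Finset.univ.filter
            (fun S' : Fin n → Fin a => (t :: T').Sublist (s :: List.ofFn S'))).card
          = if s = t
            then (Finset.univ.filter (fun S' : Fin n → Fin a => T'.Sublist (List.ofFn S'))).card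
            else (Finset.univ.filter
              (fun S' : Fin n → Fin a => (t :: T').Sublist (List.ofFn S'))).card := by
        intro s
        split_ifs with h
        · congr 1
          apply Finset.filter_congr
          intro S' _
          rw [cons_sublist_iff, if_pos h]
        · congr 1
          apply Finset.filter_congr
          intro S' _
          rw [cons_sublist_iff, if_neg h]
      rw [Finset.sum_congr rfl (fun s _ => hsplit s)]
      rw [Finset.sum_ite, Finset.sum_const, Finset.sum_const]
      have h1 : (Finset.univ.filter (fun s : Fin a => s = t)) = {t} := by
        ext x; simp
      have h2 : (Finset.univ.filter (fun s : Fin a => ¬ s = t)) = Finset.univ.erase t := by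
        ext x; simp [Finset.mem_erase]
      rw [h1, h2, Finset.card_singleton, Finset.card_erase_of_mem (Finset.mem_univ t),
        Finset.card_univ, Fintype.card_fin, one_smul, smul_eq_mul]
      rw [ih T', ih (t :: T'), List.length_cons]
      exact sum_step a n T'.length

theorem stmt_3 (a n k : ℕ) (ha : 2 ≤ a) (hk : 1 ≤ k) (hkn : k ≤ n)
    (T : List (Fin a)) (hT : T.length = k) :
    (Finset.univ.filter (fun S : Fin n → Fin a => T.Sublist (List.ofFn S))).card
      = ∑ i ∈ Finset.Icc k n, n.choose i * (a - 1) ^ (n - i) := by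
  rw [main_count a (by omega) n T, hT]
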